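/- Let n be a natural number and let M_n(ℂ) denote the algebra of n × n complex matrices. Then every 2-local derivation Δ : M_n(ℂ) → M_n(ℂ) is a derivation (in particular Δ is linear). -/

import Mathlib

open Matrix

namespace TwoLocalKK

variable {n : ℕ}

local notation "𝕄" => Matrix (Fin n) (Fin n) ℂ

/-- Shorthand for the matrix unit `E i j`. -/
def e (i j : Fin n) : Matrix (Fin n) (Fin n) ℂ := Matrix.single i j (1 : ℂ)

lemma trace_mul_e (m : 𝕄) (i j : Fin n) : (m * e j i).trace = m i j := by
  rw [trace_mul_comm, Matrix.trace, Finset.sum_eq_single j]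
  · simp [e, Matrix.diag]
  · intro b _ hb
    simp [e, Matrix.diag, Matrix.mul_apply, Matrix.single, hb.symm]
  · simp

lemma one_eq_sum : (1 : 𝕄) = ∑ k, e k k := by
  ext a b
  rw [Matrix.sum_apply]
  by_cases h : a = b
  · subst h
    rw [Finset.sum_eq_single a (fun k _ hk => by simp [e, hk])
        (fun habs => absurd (Finset.mem_univ a) habs)]
    simp [e]
  · rw [Finset.sum_eq_zero (fun k _ => by
      by_cases hk : k = a
      · subst hk; simp [e, h]
      · simp [e, hk])]
    simp [Matrix.one_apply, h]

set_option maxHeartbeats 1000000 in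
lemma trace_deriv_zero (D : 𝕄 →ₗ[ℂ] 𝕄)
    (hD : ∀ u v, D (u * v) = D u * v + u * D v) (z : 𝕄) :
    (D z).trace = 0 := by
  have hone : D 1 = 0 := by
    have h := hD 1 1
    simp only [one_mul, mul_one] at h
    exact left_eq_add.mp h
  have hswap : ∀ x y : 𝕄, (D (x * y)).trace = (D (y * x)).trace := by
    intro x y
    rw [hD, hD, trace_add, trace_add, trace_mul_comm (D x) y, trace_mul_comm x (D y)]
    ring
  have hdiag : ∀ i j : Fin n, (D (e i i)).trace = (D (e j j)).trace := by
    intro i j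
    have h := hswap (e i j) (e j i)
    simpa [e, Matrix.single_mul_single_same] using h
  have hoff : ∀ i j : Fin n, i ≠ j → (D (e i j)).trace = 0 := by
    intro i j hij
    have h := hswap (e i i) (e i j)
    rw [show e i i * e i j = e i j by simp [e],
        show e i j * e i i = 0 from Matrix.single_mul_single_of_ne _ _ _ _ (Ne.symm hij) _] at h
    simpa using h
  have hdiag0 : ∀ i : Fin n, (D (e i i)).trace = 0 := by
    intro i
    have hsum : ∑ j, (D (e j j)).trace = 0 := by
      rw [← trace_sum, ← map_sum, ← one_eq_sum, hone, trace_zero]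
    have hconst : ∑ j : Fin n, (D (e j j)).trace = (n : ℂ) * (D (e i i)).trace := by
      rw [Finset.sum_congr rfl (fun j _ => hdiag j i), Finset.sum_const, Finset.card_univ,
        Fintype.card_fin, nsmul_eq_mul]
    have hn : (n : ℂ) ≠ 0 := Nat.cast_ne_zero.mpr i.pos.ne'
    have h0 : (n : ℂ) * (D (e i i)).trace = 0 := by rw [← hconst]; exact hsum
    exact (mul_eq_zero.mp h0).resolve_left hn
  rw [matrix_eq_sum_single z]
  simp only [map_sum, trace_sum]
  refine Finset.sum_eq_zero fun i _ => Finset.sum_eq_zero fun j _ => ?_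
  have hsmul : Matrix.single i j (z i j) = z i j • e i j := by simp [e]
  rw [hsmul, _root_.map_smul, trace_smul]
  by_cases hij : i = j
  · subst hij; rw [hdiag0]; simp
  · rw [hoff i j hij]; simp

set_option maxHeartbeats 1000000 in
lemma leibniz_of (L : 𝕄 →ₗ[ℂ] 𝕄)
    (hpair : ∀ x y : 𝕄, ∃ D : 𝕄 →ₗ[ℂ] 𝕄,
      (∀ u v, D (u * v) = D u * v + u * D v) ∧ L x = D x ∧ L y = D y) :
    ∀ u v, L (u * v) = L u * v + u * L v := by
  classical
  have key : ∀ x y : 𝕄, (L x * y).trace = -(x * L y).trace := by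
    intro x y
    obtain ⟨D, hD, hx, hy⟩ := hpair x y
    have h0 := trace_deriv_zero D hD (x * y)
    rw [hD, trace_add] at h0
    rw [hx, hy]
    linear_combination h0
  have L1 : L 1 = 0 := by
    obtain ⟨D, hD, h1, -⟩ := hpair 1 1
    rw [h1]
    have h := hD 1 1
    simp only [one_mul, mul_one] at h
    exact left_eq_add.mp h
  set B : 𝕄 →ₗ[ℂ] 𝕄 →ₗ[ℂ] 𝕄 := LinearMap.mk₂ ℂ (fun u v => L (u * v) - L u * v - u * L v)
    (by intro x y v; simp [add_mul]; abel)
    (by intro c x v; simp [smul_mul_assoc, smul_sub])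
    (by intro u x y; simp [mul_add]; abel)
    (by intro c u v; simp [mul_smul_comm, smul_sub]) with hBset
  have hB : ∀ u v : 𝕄, B u v = L (u * v) - L u * v - u * L v := fun u v => rfl
  have Bright : ∀ u v : 𝕄, ∃ g, B u v = u * g := by
    intro u v
    obtain ⟨D, hD, h1, h2⟩ := hpair (u * v) u
    exact ⟨D v - L v, by rw [hB, h1, hD, h2, mul_sub]; abel⟩
  have Bleft : ∀ u v : 𝕄, ∃ g, B u v = g * v := by
    intro u v
    obtain ⟨D, hD, h1, h2⟩ := hpair (u * v) v
    exact ⟨D u - L u, by rw [hB, h1, hD, h2, sub_mul]; abel⟩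
  have Bexp : ∀ u v w : 𝕄, (B u v * w).trace
      = -(u * v * L w).trace + (u * L (v * w)).trace + (v * L (w * u)).trace := by
    intro u v w
    rw [hB, sub_mul, sub_mul, trace_sub, trace_sub]
    have t1 : (L (u * v) * w).trace = -(u * v * L w).trace := key (u * v) w
    have t2 : (L u * v * w).trace = -(u * L (v * w)).trace := by
      rw [mul_assoc]; exact key u (v * w)
    have t3 : (u * L v * w).trace = -(v * L (w * u)).trace := by
      rw [trace_mul_comm (u * L v) w, ← mul_assoc, trace_mul_comm (w * u) (L v)]
      exact key v (w * u)
    rw [t1, t2, t3]; ring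
  have Bcyc : ∀ u v w : 𝕄, (B u v * w).trace = (B v w * u).trace := by
    intro u v w
    rw [Bexp u v w, Bexp v w u]
    have a : (u * L (v * w)).trace = (L (v * w) * u).trace := trace_mul_comm u (L (v * w))
    have b : (L (v * w) * u).trace = -(v * w * L u).trace := key (v * w) u
    have c : (w * L (u * v)).trace = (L (u * v) * w).trace := trace_mul_comm w (L (u * v))
    have d : (L (u * v) * w).trace = -(u * v * L w).trace := key (u * v) w
    linear_combination (a.trans b) - (c.trans d)
  have rowshape : ∀ (i j k l p q : Fin n), p ≠ i → (B (e i j) (e k l)) p q = 0 := by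
    intro i j k l p q hp
    obtain ⟨g, hg⟩ := Bright (e i j) (e k l)
    rw [hg]
    simp [e, hp]
  have colshape : ∀ (i j k l p q : Fin n), q ≠ l → (B (e i j) (e k l)) p q = 0 := by
    intro i j k l p q hq
    obtain ⟨g, hg⟩ := Bleft (e i j) (e k l)
    rw [hg]
    simp [e, hq]
  have R12 : ∀ i j k l : Fin n, (B (e i j) (e k l)) i l = (B (e k l) (e l i)) j i := by
    intro i j k l
    have h := Bcyc (e i j) (e k l) (e l i)
    rwa [trace_mul_e, trace_mul_e] at h
  have R3 : ∀ (i i' j l : Fin n), (B (e i j) (e j l)) i l = (B (e i' j) (e j l)) i' l := by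
    intro i i' j l
    set u : 𝕄 := Matrix.of (fun _ q => if q = j then (1 : ℂ) else 0) with hu_def
    have hu : u = ∑ i'', e i'' j := by
      ext a b
      rw [Matrix.sum_apply]
      by_cases h : b = j
      · subst h
        rw [Finset.sum_eq_single a (fun k _ hk => by simp [e, hk])
            (fun habs => absurd (Finset.mem_univ a) habs)]
        simp [hu_def, e]
      · rw [Finset.sum_eq_zero (fun k _ => by simp [e, Ne.symm h])]
        simp [hu_def, h]
    obtain ⟨g, hg⟩ := Bright u (e j l)
    have claim : ∀ i₀ : Fin n, (B (e i₀ j) (e j l)) i₀ l = g j l := by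
      intro i₀
      have h1 : (B u (e j l)) i₀ l = g j l := by
        rw [hg, Matrix.mul_apply]
        simp [hu_def]
      have h2 : (B u (e j l)) i₀ l = (B (e i₀ j) (e j l)) i₀ l := by
        rw [hu, map_sum, LinearMap.sum_apply, Matrix.sum_apply]
        refine Finset.sum_eq_single i₀ (fun b _ hb => rowshape b j j l i₀ l (Ne.symm hb))
          (fun habs => absurd (Finset.mem_univ i₀) habs)
      rw [← h2, h1]
    rw [claim i, claim i']
  have R4 : ∀ i j : Fin n, (B (e i j) (e j j)) i j = 0 := by
    intro i j
    have hB1 : B (e i j) (1 : 𝕄) = 0 := by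
      rw [hB, mul_one, mul_one, L1, mul_zero, sub_zero, sub_self]
    have hsum : ∑ k, (B (e i j) (e k k)) i j = 0 := by
      have hs : B (e i j) (1 : 𝕄) = ∑ k, B (e i j) (e k k) := by
        rw [one_eq_sum, map_sum]
      calc ∑ k, (B (e i j) (e k k)) i j = (∑ k, B (e i j) (e k k)) i j :=
            (Matrix.sum_apply _ _ _ _).symm
        _ = (B (e i j) (1 : 𝕄)) i j := by rw [← hs]
        _ = 0 := by rw [hB1]; rfl
    rw [Finset.sum_eq_single j (fun k _ hk => colshape i j k k i j (Ne.symm hk))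
      (fun habs => absurd (Finset.mem_univ j) habs)] at hsum
    exact hsum
  have units : ∀ i j k l : Fin n, B (e i j) (e k l) = 0 := by
    intro i j k l
    ext p q
    rw [Matrix.zero_apply]
    by_cases hp : p = i
    · by_cases hq : q = l
      · subst hp; subst hq
        by_cases hjk : j = k
        · subst hjk
          rw [R12 p j j q, R3 j p q p, R12 p q q p]
          exact R4 q p
        · rw [R12]
          exact rowshape k q q p j p hjk
      · exact colshape i j k l p q hq
    · exact rowshape i j k l p q hp
  have Bzero : ∀ u v : 𝕄, B u v = 0 := by
    intro u v
    induction u using Matrix.induction_on' with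
    | h_zero => simp
    | h_add p q hp hq => simp [hp, hq]
    | h_std_basis i j x =>
      induction v using Matrix.induction_on' with
      | h_zero => simp
      | h_add p q hp hq => simp [hp, hq]
      | h_std_basis k l y =>
        have h1 : Matrix.single i j x = x • e i j := by simp [e]
        have h2 : Matrix.single k l y = y • e k l := by simp [e]
        rw [h1, h2]
        simp [units]
  intro u v
  have h := Bzero u v
  rw [hB, sub_sub, sub_eq_zero] at h
  exact h

end TwoLocalKK

open TwoLocalKK in
/-- **Kim–Kim.**  Every 2-local derivation on the matrix algebra `Mₙ(ℂ)` is a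
derivation (in particular, it is linear). -/
theorem two_local_derivation_matrix_is_derivation
    (n : ℕ) (Δ : Matrix (Fin n) (Fin n) ℂ → Matrix (Fin n) (Fin n) ℂ)
    (hΔ : ∀ x y : Matrix (Fin n) (Fin n) ℂ,
      ∃ D : Matrix (Fin n) (Fin n) ℂ →ₗ[ℂ] Matrix (Fin n) (Fin n) ℂ,
        (∀ u v, D (u * v) = D u * v + u * D v) ∧ Δ x = D x ∧ Δ y = D y) :
    ∃ D : Matrix (Fin n) (Fin n) ℂ →ₗ[ℂ] Matrix (Fin n) (Fin n) ℂ,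
      (∀ u v, D (u * v) = D u * v + u * D v) ∧ ∀ x, Δ x = D x := by
  have key : ∀ x y : Matrix (Fin n) (Fin n) ℂ,
      ((Δ x) * y).trace = -(x * Δ y).trace := by
    intro x y
    obtain ⟨D, hD, hx, hy⟩ := hΔ x y
    have h0 := trace_deriv_zero D hD (x * y)
    rw [hD, trace_add] at h0
    rw [hx, hy]
    linear_combination h0
  have eqz : ∀ m : Matrix (Fin n) (Fin n) ℂ, (∀ w, (m * w).trace = 0) → m = 0 := by
    intro m h
    ext i j
    have h0 := h (e j i)
    rw [trace_mul_e] at h0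
    simpa using h0
  let L : Matrix (Fin n) (Fin n) ℂ →ₗ[ℂ] Matrix (Fin n) (Fin n) ℂ :=
    { toFun := Δ
      map_add' := by
        intro x y
        have h : Δ (x + y) - Δ x - Δ y = 0 := by
          refine eqz _ fun w => ?_
          rw [sub_mul, sub_mul, trace_sub, trace_sub, key (x + y) w, key x w, key y w,
            add_mul, trace_add]
          ring
        rw [sub_sub, sub_eq_zero] at h
        exact h
      map_smul' := by
        intro c x
        simp only [RingHom.id_apply]
        have h : Δ (c • x) - c • Δ x = 0 := by
          refine eqz _ fun w => ?_
          rw [sub_mul, trace_sub, key (c • x) w, smul_mul_assoc, trace_smul,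
            smul_mul_assoc, trace_smul, key x w]
          simp [smul_eq_mul]
        rw [sub_eq_zero] at h
        exact h }
  refine ⟨L, leibniz_of L ?_, fun x => rfl⟩
  intro x y
  exact hΔ x y
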